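/- Let T be an ordered rooted tree with rank R(T) = W ≥ 2. Then T has a rank-W-witness whose coordinate X satisfies X = 1 or X = W. -/

import Mathlib

/-- A finite (ordered) rooted tree: a root together with the list of subtrees
rooted at its children, listed from left to right. -/
inductive RTree : Type where
  | node : List RTree → RTree

namespace RTree

/-- The subtrees rooted at the children of the root, from left to right. -/
def children : RTree → List RTree
  | node cs => cs

/-- A rank-`W`-witness for a tree whose root has `rs.length ≥ 1` children,
where `rs` is the list of ranks of the children subtrees (left to right,
`0`-indexed).  It consists of a set `big` of big children (the others are
small), a coordinate `X` with `1 ≤ X ≤ W`, and the index `v` of the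
vertical child, which must be big, subject to (R1ℓ), (R1r), (R2ℓ), (R2r)
and (R3). -/
def IsRankWitness (rs : List ℕ) (W : ℕ) (big : Finset (Fin rs.length)) (X : ℕ)
    (v : Fin rs.length) : Prop :=
  1 ≤ X ∧ X ≤ W ∧ v ∈ big ∧
  -- (R1ℓ): at most X-1 big children are strictly left of c_v
  ((big.filter fun i => i < v).card < X) ∧
  -- (R1r): at most W-X big children are strictly right of c_v
  ((big.filter fun i => v < i).card + X ≤ W) ∧
  -- (R2ℓ): every small child left of c_v has rank ≤ X-1-ℓ_i
  (∀ i : Fin rs.length, i ∉ big → i < v →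
      rs.get i + (big.filter fun j => j < i).card + 1 ≤ X) ∧
  -- (R2r): every small child right of c_v has rank ≤ W-X-r_i
  (∀ i : Fin rs.length, i ∉ big → v < i →
      rs.get i + (big.filter fun j => i < j).card + X ≤ W) ∧
  -- (R3): injective rank-bounds π : big → {1,…,W} dominating the ranks
  (∃ π : Fin rs.length → ℕ,
      (∀ i ∈ big, rs.get i ≤ π i ∧ 1 ≤ π i ∧ π i ≤ W) ∧
      Set.InjOn π big)

/-- `T` (with child rank list `rs`) has some rank-`W`-witness. -/
def hasRankWitness (rs : List ℕ) (W : ℕ) : Prop :=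
  ∃ (big : Finset (Fin rs.length)) (X : ℕ) (v : Fin rs.length),
    IsRankWitness rs W big X v

/-- Rank of a tree, given the list of ranks of the children of the root:
`1` for a single node, else the smallest `W ≥ 1` admitting a rank-`W`-witness. -/
noncomputable def rankAux (rs : List ℕ) : ℕ :=
  if rs = [] then 1 else sInf {W | 1 ≤ W ∧ hasRankWitness rs W}

/-- The rank `R(T)` of an ordered rooted tree. -/
noncomputable def rank : RTree → ℕ
  | node cs => rankAux (cs.attach.map fun c => rank c.1)
decreasing_by have := List.sizeOf_lt_of_mem c.2; simp only [RTree.node.sizeOf_spec]; omega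

/-- A left-corner-`W`-witness, given the list `rs` of ranks of the children of
the root: a number `W'` with `1 ≤ W' ≤ W+1` and indices
`σ(W') < … < σ(W)` (1-based positions in `{1,…,d}`, so the rank of child
`σ w` is `rs.getD (σ w - 1) 0`) satisfying (C1) and (C2), where by
convention `σ(W'-1) = 0` and `σ(W+1) = d+1`. -/
def IsLeftCornerWitness (rs : List ℕ) (W W' : ℕ) (σ : ℕ → ℕ) : Prop :=
  1 ≤ W' ∧ W' ≤ W + 1 ∧
  (∀ w, W' ≤ w → w ≤ W → 1 ≤ σ w ∧ σ w ≤ rs.length) ∧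
  (∀ w, W' ≤ w → w + 1 ≤ W → σ w < σ (w + 1)) ∧
  -- (C1)
  (∀ w, W' ≤ w → w ≤ W → rs.getD (σ w - 1) 0 = w) ∧
  -- (C2): for `W'-1 ≤ w ≤ W`, children strictly between σ(w) and σ(w+1)
  -- have rank ≤ w-1
  (∀ w, W' ≤ w + 1 → w ≤ W → ∀ i,
      (if W' ≤ w then σ w else 0) < i →
      i < (if w + 1 ≤ W then σ (w + 1) else rs.length + 1) →
      rs.getD (i - 1) 0 + 1 ≤ w)

/-- A right-corner-`W`-witness: the mirror notion, with
`σ(W) < … < σ(W')` and the conventions `σ(W'-1) = d+1`, `σ(W+1) = 0`. -/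
def IsRightCornerWitness (rs : List ℕ) (W W' : ℕ) (σ : ℕ → ℕ) : Prop :=
  1 ≤ W' ∧ W' ≤ W + 1 ∧
  (∀ w, W' ≤ w → w ≤ W → 1 ≤ σ w ∧ σ w ≤ rs.length) ∧
  (∀ w, W' ≤ w → w + 1 ≤ W → σ (w + 1) < σ w) ∧
  -- (C1)
  (∀ w, W' ≤ w → w ≤ W → rs.getD (σ w - 1) 0 = w) ∧
  -- (C2)
  (∀ w, W' ≤ w + 1 → w ≤ W → ∀ i,
      (if w + 1 ≤ W then σ (w + 1) else 0) < i →
      i < (if W' ≤ w then σ w else rs.length + 1) →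
      rs.getD (i - 1) 0 + 1 ≤ w)

end RTree

namespace RTreeAux


open Finset

/-- function version of the rank witness predicate. -/
def Wit (n W : ℕ) (r : Fin n → ℕ) (big : Finset (Fin n)) (X : ℕ) (v : Fin n) : Prop :=
  1 ≤ X ∧ X ≤ W ∧ v ∈ big ∧
  ((big.filter fun i => i < v).card < X) ∧
  ((big.filter fun i => v < i).card + X ≤ W) ∧
  (∀ i : Fin n, i ∉ big → i < v →
      r i + (big.filter fun j => j < i).card + 1 ≤ X) ∧
  (∀ i : Fin n, i ∉ big → v < i →
      r i + (big.filter fun j => i < j).card + X ≤ W) ∧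
  (∃ π : Fin n → ℕ,
      (∀ i ∈ big, r i ≤ π i ∧ 1 ≤ π i ∧ π i ≤ W) ∧
      Set.InjOn π big)

/-- descending-staircase-with-doubled-end certificate. -/
def DC (n W : ℕ) (r : Fin n → ℕ) : Prop :=
  ∃ (j : ℕ) (a : ℕ → Fin n),
    (∀ s s', s < s' → s' ≤ j + 1 → a s < a s') ∧
    (∀ s, s ≤ j + 1 → r (a s) = W - min s j)

/-- `Stair n W r t i`: `i` is the `t`-th element of the canonical (leftmost)
descending staircase: the least position with value `W - t` to the right of
the `(t-1)`-st element. -/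
inductive Stair (n W : ℕ) (r : Fin n → ℕ) : ℕ → Fin n → Prop
  | zero (i : Fin n) (h : r i = W) (hmin : ∀ i', i' < i → r i' ≠ W) :
      Stair n W r 0 i
  | succ (t : ℕ) (p i : Fin n) (hp : Stair n W r t p) (hpi : p < i)
      (h : r i = W - (t + 1)) (hmin : ∀ i', p < i' → i' < i → r i' ≠ W - (t + 1)) :
      Stair n W r (t + 1) i

variable {n W : ℕ} {r : Fin n → ℕ}

lemma wit_bound {big : Finset (Fin n)} {X : ℕ} {v : Fin n}
    (h : Wit n W r big X v) (i : Fin n) : r i ≤ W := by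
  obtain ⟨h1, h2, hv, h4, h5, h6, h7, π, hπ, hinj⟩ := h
  by_cases hi : i ∈ big
  · exact (hπ i hi).1.trans (hπ i hi).2.2
  · rcases lt_trichotomy i v with hc | rfl | hc
    · have := h6 i hi hc; omega
    · exact absurd hv hi
    · have := h7 i hi hc; omega

lemma stair_val {t : ℕ} {i : Fin n} (h : Stair n W r t i) : r i = W - t := by
  cases h with
  | zero i h hmin => simpa using h
  | succ t p i hp hpi h hmin => exact h

lemma stair_lt_W (hpos : ∀ i, 1 ≤ r i) {t : ℕ} {i : Fin n}
    (h : Stair n W r t i) : t < W := by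
  have h1 := stair_val h
  have h2 := hpos i
  omega

lemma stair_unique {t : ℕ} {i i' : Fin n}
    (h : Stair n W r t i) (h' : Stair n W r t i') : i = i' := by
  induction h generalizing i' with
  | zero i hri hmin =>
    cases h' with
    | zero i' hri' hmin' =>
      rcases lt_trichotomy i i' with hc | hc | hc
      · exact absurd hri (hmin' i hc)
      · exact hc
      · exact absurd hri' (hmin i' hc)
  | succ t p i hp hpi hri hmin ih =>
    cases h' with
    | succ _ p' i' hp' hpi' hri' hmin' =>
      obtain rfl : p = p' := ih hp'
      rcases lt_trichotomy i i' with hc | hc | hc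
      · exact absurd hri (hmin' i hpi hc)
      · exact hc
      · exact absurd hri' (hmin i' hpi' hc)

lemma stair_mono {t t' : ℕ} {i i' : Fin n}
    (h : Stair n W r t i) (h' : Stair n W r t' i') (htt : t < t') : i < i' := by
  induction h' generalizing t with
  | zero i' hri' hmin' => omega
  | succ u p i' hp hpi' hri' hmin' ih =>
    rcases Nat.lt_succ_iff_lt_or_eq.1 htt with hc | rfl
    · exact (ih h hc).trans hpi'
    · obtain rfl : i = p := stair_unique h hp
      exact hpi'

lemma stair_exists_zero (i : Fin n) (h : r i = W) :
    ∃ s, s ≤ i ∧ Stair n W r 0 s := by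
  classical
  set S := Finset.univ.filter (fun x : Fin n => r x = W) with hS
  have hiS : i ∈ S := by simp [hS, h]
  have hne : S.Nonempty := ⟨i, hiS⟩
  refine ⟨S.min' hne, S.min'_le i hiS, .zero _ ?_ ?_⟩
  · have := S.min'_mem hne
    simpa [hS] using this
  · intro i' hi' hri'
    exact absurd (S.min'_le i' (by simp [hS, hri'])) (not_le.2 hi')

lemma stair_exists_succ {t : ℕ} {p i : Fin n} (hp : Stair n W r t p)
    (hpi : p < i) (h : r i = W - (t + 1)) :
    ∃ s, s ≤ i ∧ Stair n W r (t + 1) s := by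
  classical
  set S := Finset.univ.filter (fun x : Fin n => p < x ∧ r x = W - (t + 1)) with hS
  have hiS : i ∈ S := by simp [hS, h, hpi]
  have hne : S.Nonempty := ⟨i, hiS⟩
  have hmem := S.min'_mem hne
  simp only [hS, Finset.mem_filter, Finset.mem_univ, true_and] at hmem
  refine ⟨S.min' hne, S.min'_le i hiS, .succ t p _ hp hmem.1 hmem.2 ?_⟩
  intro i' hpi' hi' hri'
  exact absurd (S.min'_le i' (by simp [hS, hpi', hri'])) (not_le.2 hi')



noncomputable def stairSet (n W : ℕ) (r : Fin n → ℕ) (i : Fin n) : Finset (Fin n) :=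
  @Finset.filter _ (fun s => (∃ t, Stair n W r t s) ∧ s < i) (Classical.decPred _)
    Finset.univ

noncomputable def LS (n W : ℕ) (r : Fin n → ℕ) (i : Fin n) : Finset ℕ :=
  @Finset.filter _ (fun t => ∃ s, Stair n W r t s ∧ s < i) (Classical.decPred _)
    (Finset.range W)

variable {n W : ℕ} {r : Fin n → ℕ}

lemma mem_stairSet {s i : Fin n} :
    s ∈ stairSet n W r i ↔ (∃ t, Stair n W r t s) ∧ s < i := by
  simp [stairSet]

lemma mem_LS {t : ℕ} {i : Fin n} :
    t ∈ LS n W r i ↔ t < W ∧ ∃ s, Stair n W r t s ∧ s < i := by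
  simp [LS]

lemma LS_eq_image (hpos : ∀ i, 1 ≤ r i) (i : Fin n) :
    LS n W r i = (stairSet n W r i).image (fun s => W - r s) := by
  ext t
  simp only [mem_LS, Finset.mem_image, mem_stairSet]
  constructor
  · rintro ⟨htW, s, hs, hsi⟩
    refine ⟨s, ⟨⟨t, hs⟩, hsi⟩, ?_⟩
    rw [stair_val hs]
    omega
  · rintro ⟨s, ⟨⟨t', hs⟩, hsi⟩, heq⟩
    have hrv := stair_val hs
    have ht' := stair_lt_W hpos hs
    have : t = t' := by omega
    subst this
    exact ⟨ht', s, hs, hsi⟩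

lemma LS_card (hpos : ∀ i, 1 ≤ r i) (i : Fin n) :
    (LS n W r i).card = (stairSet n W r i).card := by
  rw [LS_eq_image hpos]
  apply Finset.card_image_of_injOn
  intro x hx y hy hxy
  have hxy' : W - r x = W - r y := hxy
  rw [mem_coe, mem_stairSet] at hx hy
  obtain ⟨⟨tx, hx'⟩, _⟩ := hx
  obtain ⟨⟨ty, hy'⟩, _⟩ := hy
  have h1 := stair_val hx'
  have h2 := stair_val hy'
  have h3 := stair_lt_W hpos hx'
  have h4 := stair_lt_W hpos hy'
  have : tx = ty := by omega
  subst this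
  exact stair_unique hx' hy'

lemma LS_dc {t : ℕ} {i : Fin n} (h : t + 1 ∈ LS n W r i) : t ∈ LS n W r i := by
  rw [mem_LS] at h ⊢
  obtain ⟨hW, s, hs, hsi⟩ := h
  cases hs with
  | succ t p s hp hps hval hmin =>
    exact ⟨by omega, p, hp, hps.trans hsi⟩

lemma initseg (S : Finset ℕ) (hdc : ∀ t, t + 1 ∈ S → t ∈ S) :
    S = Finset.range S.card := by
  have hdown : ∀ t, t ∈ S → ∀ u, u ≤ t → u ∈ S := by
    intro t
    induction t with
    | zero =>
      intro ht u hu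
      obtain rfl : u = 0 := by omega
      exact ht
    | succ t ih =>
      intro ht u hu
      rcases Nat.lt_succ_iff_lt_or_eq.1 (Nat.lt_succ_of_le hu) with hc | rfl
      · exact ih (hdc t ht) u (by omega)
      · exact ht
  have hsub : S ⊆ Finset.range S.card := by
    intro t ht
    have hsub2 : Finset.range (t + 1) ⊆ S := by
      intro u hu
      exact hdown t ht u (by simpa [Nat.lt_succ_iff] using Finset.mem_range.1 hu)
    have := Finset.card_le_card hsub2
    simp only [Finset.card_range] at this
    exact Finset.mem_range.2 (by omega)
  exact Finset.eq_of_subset_of_card_le hsub (by simp)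

lemma LS_eq_range (i : Fin n) : LS n W r i = Finset.range (LS n W r i).card :=
  initseg _ (fun _ h => LS_dc h)

lemma smallBound (hpos : ∀ i, 1 ≤ r i) (hbW : ∀ i, r i ≤ W)
    (hnD : ¬ DC n W r) (i : Fin n) (hi : ¬ ∃ t, Stair n W r t i) :
    r i + (stairSet n W r i).card + 1 ≤ W := by
  by_contra hcon
  set c := (LS n W r i).card with hc
  have hcard : (stairSet n W r i).card = c := (LS_card hpos i).symm
  rw [hcard] at hcon
  have hriW := hbW i
  set u := W - r i with hu
  have huc : u ≤ c := by omega
  have hmemLS : ∀ x, x ∈ LS n W r i ↔ x < c := by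
    intro x
    conv_lhs => rw [LS_eq_range i]
    simp [hc]
  rcases lt_or_eq_of_le huc with hult | heq
  · have hex : ∀ s, s ≤ u → ∃ q, Stair n W r s q ∧ q < i := by
      intro s hs
      have : s ∈ LS n W r i := (hmemLS s).2 (by omega)
      exact (mem_LS.1 this).2
    apply hnD
    refine ⟨u, fun s => if hs : s ≤ u then (hex s hs).choose else i, ?_, ?_⟩
    · intro s s' hss hs'
      by_cases h' : s' ≤ u
      · have hs : s ≤ u := by omega
        simp only [dif_pos hs, dif_pos h']
        exact stair_mono (hex s hs).choose_spec.1 (hex s' h').choose_spec.1 hss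
      · have hs : s ≤ u := by omega
        simp only [dif_pos hs, dif_neg h']
        exact (hex s hs).choose_spec.2
    · intro s hs
      by_cases h' : s ≤ u
      · simp only [dif_pos h']
        rw [stair_val (hex s h').choose_spec.1, min_eq_left h']
      · have hsu : s = u + 1 := by omega
        simp only [dif_neg h']
        rw [hsu, min_eq_right (by omega)]
        omega
  · rcases Nat.eq_zero_or_pos c with hc0 | hcpos
    · have hriW' : r i = W := by omega
      obtain ⟨s, hsle, hs⟩ := stair_exists_zero i hriW'
      have hsi : s < i := lt_of_le_of_ne hsle (fun h => hi ⟨0, h ▸ hs⟩)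
      have h0 : (0 : ℕ) ∈ LS n W r i := mem_LS.2 ⟨by have := hpos i; omega, s, hs, hsi⟩
      rw [hmemLS] at h0
      omega
    · have hcm : c - 1 ∈ LS n W r i := (hmemLS _).2 (by omega)
      obtain ⟨p, hp, hpi⟩ := (mem_LS.1 hcm).2
      have hri' : r i = W - ((c - 1) + 1) := by omega
      obtain ⟨s, hsle, hs⟩ := stair_exists_succ hp hpi hri'
      have hsi : s < i := lt_of_le_of_ne hsle (fun h => hi ⟨(c - 1) + 1, h ▸ hs⟩)
      have hcW : (c - 1) + 1 < W := by have := hpos i; omega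
      have hcmem : (c - 1) + 1 ∈ LS n W r i := mem_LS.2 ⟨hcW, s, hs, hsi⟩
      rw [hmemLS] at hcmem
      omega

lemma lemma1 (hn : 0 < n) (hpos : ∀ i, 1 ≤ r i) (hbW : ∀ i, r i ≤ W)
    (hW : 1 ≤ W) (hnD : ¬ DC n W r) :
    ∃ big v, Wit n W r big W v := by
  classical
  set v : Fin n := ⟨n - 1, by omega⟩ with hv
  have hvtop : ∀ i : Fin n, ¬ v < i := by
    intro i hlt
    rw [Fin.lt_def] at hlt
    have := i.isLt
    simp only [hv] at hlt
    omega
  set big := Finset.univ.filter (fun i => (∃ t, Stair n W r t i) ∨ i = v) with hbig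
  have hmem : ∀ i, i ∈ big ↔ ((∃ t, Stair n W r t i) ∨ i = v) := by
    intro i; simp [hbig]
  have hfl : ∀ i : Fin n, big.filter (fun s => s < i) = stairSet n W r i := by
    intro i
    ext s
    simp only [Finset.mem_filter, mem_stairSet, hmem]
    constructor
    · rintro ⟨hs | rfl, hsi⟩
      · exact ⟨hs, hsi⟩
      · exact absurd hsi (hvtop i)
    · rintro ⟨hs, hsi⟩
      exact ⟨Or.inl hs, hsi⟩
  refine ⟨big, v, hW, le_rfl, (hmem v).2 (Or.inr rfl), ?_, ?_, ?_, ?_, ?_⟩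
  · -- R1ℓ
    rw [hfl v]
    by_cases hsv : ∃ t, Stair n W r t v
    · obtain ⟨tv, htv⟩ := hsv
      have hsubset : LS n W r v ⊆ Finset.range tv := by
        intro t ht
        obtain ⟨htW, s, hs, hsv'⟩ := mem_LS.1 ht
        rcases lt_trichotomy t tv with hc | rfl | hc
        · exact Finset.mem_range.2 hc
        · exact absurd (stair_unique hs htv) (ne_of_lt hsv')
        · exact absurd (stair_mono htv hs hc) (asymm hsv')
      have h1 := Finset.card_le_card hsubset
      rw [Finset.card_range] at h1
      rw [← LS_card hpos]
      exact lt_of_le_of_lt h1 (stair_lt_W hpos htv)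
    · have := smallBound hpos hbW hnD v hsv
      have := hpos v
      omega
  · -- R1r
    have : big.filter (fun i => v < i) = ∅ :=
      Finset.filter_eq_empty_iff.2 (fun {i} _ => hvtop i)
    rw [this]
    simp
  · -- R2ℓ
    intro i hib hiv
    have hist : ¬ ∃ t, Stair n W r t i := fun ht => hib ((hmem i).2 (Or.inl ht))
    rw [hfl i]
    exact smallBound hpos hbW hnD i hist
  · -- R2r
    intro i _ hvi
    exact absurd hvi (hvtop i)
  · -- R3
    refine ⟨fun i => r i, fun i _ => ⟨le_rfl, hpos i, hbW i⟩, ?_⟩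
    have hle : ∀ i : Fin n, i ≤ v := fun i => not_lt.1 (hvtop i)
    have hstair : ∀ x y : Fin n, (∃ t, Stair n W r t x) → (∃ t, Stair n W r t y) →
        r x = r y → x = y := by
      rintro x y ⟨tx, hx'⟩ ⟨ty, hy'⟩ hxy
      have h1 := stair_val hx'
      have h2 := stair_val hy'
      have h3 := stair_lt_W hpos hx'
      have h4 := stair_lt_W hpos hy'
      have : tx = ty := by omega
      subst this
      exact stair_unique hx' hy'
    intro x hx y hy hxy
    rw [Finset.mem_coe, hmem] at hx hy
    have hxy' : r x = r y := hxy
    by_cases hsv : ∃ t, Stair n W r t v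
    · have hx' : ∃ t, Stair n W r t x := by rcases hx with h | rfl; exacts [h, hsv]
      have hy' : ∃ t, Stair n W r t y := by rcases hy with h | rfl; exacts [h, hsv]
      exact hstair x y hx' hy' hxy'
    · have key : ∀ x : Fin n, (∃ t, Stair n W r t x) → r x = r v → False := by
        rintro x ⟨tx, hx'⟩ hxv
        have hxltv : x < v :=
          lt_of_le_of_ne (hle x) (fun h => hsv ⟨tx, h ▸ hx'⟩)
        have htx : tx ∈ LS n W r v := mem_LS.2 ⟨stair_lt_W hpos hx', x, hx', hxltv⟩
        rw [LS_eq_range] at htx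
        have htxc := Finset.mem_range.1 htx
        have hsb := smallBound hpos hbW hnD v hsv
        rw [← LS_card hpos] at hsb
        have hvx := stair_val hx'
        omega
      rcases hx with hx' | rfl
      · rcases hy with hy' | rfl
        · exact hstair x y hx' hy' hxy'
        · exact absurd hxy' (fun h => key x hx' h)
      · rcases hy with hy' | rfl
        · exact absurd hxy'.symm (fun h => key y hy' h)
        · rfl

lemma mem_image_rev {s : Finset (Fin n)} {i : Fin n} :
    i ∈ s.image Fin.rev ↔ i.rev ∈ s := by
  simp only [Finset.mem_image]
  constructor
  · rintro ⟨x, hx, rfl⟩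
    simpa [Fin.rev_rev] using hx
  · intro h
    exact ⟨i.rev, h, by simp [Fin.rev_rev]⟩

lemma card_filter_image_rev (s : Finset (Fin n)) (p : Fin n → Prop) [DecidablePred p] :
    ((s.image Fin.rev).filter p).card = (s.filter fun x => p x.rev).card := by
  rw [Finset.filter_image, Finset.card_image_of_injective _ Fin.rev_injective]

lemma revWit {big : Finset (Fin n)} {X : ℕ} {v : Fin n}
    (h : Wit n W r big X v) :
    Wit n W (fun i => r i.rev) (big.image Fin.rev) (W + 1 - X) v.rev := by
  classical
  obtain ⟨h1, h2, hv, h4, h5, h6, h7, π, hπ, hinj⟩ := h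
  refine ⟨by omega, by omega, mem_image_rev.2 (by simpa [Fin.rev_rev] using hv),
      ?_, ?_, ?_, ?_, ?_⟩
  · -- R1ℓ
    rw [card_filter_image_rev]
    have he : (big.filter fun x => x.rev < v.rev) = big.filter fun x => v < x := by
      apply Finset.filter_congr
      intro x _
      simp [Fin.rev_lt_rev]
    rw [he]
    omega
  · -- R1r
    rw [card_filter_image_rev]
    have he : (big.filter fun x => v.rev < x.rev) = big.filter fun x => x < v := by
      apply Finset.filter_congr
      intro x _
      simp [Fin.rev_lt_rev]
    rw [he]
    omega
  · -- R2ℓ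
    intro i hib hiv
    have hib' : i.rev ∉ big := fun h => hib (mem_image_rev.2 h)
    have hiv' : v < i.rev := by
      rw [← Fin.rev_rev v] at hiv  -- i < (v.rev) ; want v < i.rev
      exact Fin.rev_lt_rev.1 (by simpa [Fin.rev_rev] using hiv)
    have := h7 i.rev hib' hiv'
    rw [card_filter_image_rev]
    have he : (big.filter fun x => x.rev < i) = big.filter fun x => i.rev < x := by
      apply Finset.filter_congr
      intro x _
      constructor
      · intro hx
        have := Fin.rev_lt_rev.2 hx
        simpa [Fin.rev_rev] using this
      · intro hx
        have := Fin.rev_lt_rev.2 hx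
        simpa [Fin.rev_rev] using this
    rw [he]
    dsimp only
    omega
  · -- R2r
    intro i hib hiv
    have hib' : i.rev ∉ big := fun h => hib (mem_image_rev.2 h)
    have hiv' : i.rev < v := by
      exact Fin.rev_lt_rev.1 (by simpa [Fin.rev_rev] using hiv)
    have := h6 i.rev hib' hiv'
    rw [card_filter_image_rev]
    have he : (big.filter fun x => i < x.rev) = big.filter fun x => x < i.rev := by
      apply Finset.filter_congr
      intro x _
      constructor
      · intro hx
        have := Fin.rev_lt_rev.2 hx
        simpa [Fin.rev_rev] using this
      · intro hx
        have := Fin.rev_lt_rev.2 hx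
        simpa [Fin.rev_rev] using this
    rw [he]
    dsimp only
    omega
  · -- R3
    refine ⟨fun i => π i.rev, ?_, ?_⟩
    · intro i hi
      exact hπ i.rev (mem_image_rev.1 hi)
    · intro x hx y hy hxy
      rw [Finset.mem_coe, mem_image_rev] at hx hy
      have : x.rev = y.rev := hinj hx hy hxy
      have := congrArg Fin.rev this
      simpa [Fin.rev_rev] using this

lemma star_right {big : Finset (Fin n)} {v : Fin n}
    (hwit : Wit n W r big W v) (hD : DC n W r) (hpos : ∀ i, 1 ≤ r i) : False := by
  classical
  obtain ⟨h1, h2, hv, h4, h5, h6, h7, π, hπ, hinj⟩ := hwit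
  obtain ⟨j, a, amono, aval⟩ := hD
  have hjW : j + 1 ≤ W := by
    have hval := aval (j + 1) le_rfl
    rw [min_eq_right (by omega)] at hval
    have := hpos (a (j + 1))
    omega
  have hainj : ∀ s s', s ≤ j + 1 → s' ≤ j + 1 → a s = a s' → s = s' := by
    intro s s' hs hs' heq
    rcases lt_trichotomy s s' with hc | hc | hc
    · exact absurd heq (ne_of_lt (amono s s' hc hs'))
    · exact hc
    · exact absurd heq.symm (ne_of_lt (amono s' s hc hs))
  have hbigW : ∀ i, r i = W → i ∈ big := by
    intro i hri
    by_contra hni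
    rcases lt_trichotomy i v with hc | rfl | hc
    · have := h6 i hni hc; omega
    · exact hni hv
    · have := h7 i hni hc; omega
  have hπW : ∀ i, r i = W → π i = W := by
    intro i hri
    have := hπ i (hbigW i hri)
    omega
  have ha0 : r (a 0) = W := by
    have := aval 0 (by omega)
    rw [min_eq_left (Nat.zero_le _)] at this
    omega
  have ha0big : a 0 ∈ big := hbigW _ ha0
  set Sm := (Finset.Icc 1 (j + 1)).filter (fun s => a s ∉ big) with hSm
  by_cases hne : Sm.Nonempty
  · set s₀ := Sm.min' hne with hs₀
    obtain ⟨hsIcc, hns⟩ := Finset.mem_filter.1 (Sm.min'_mem hne)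
    obtain ⟨hs1, hs2⟩ := Finset.mem_Icc.1 hsIcc
    have hprev : ∀ s, s < s₀ → a s ∈ big := by
      intro s hs
      rcases Nat.eq_zero_or_pos s with rfl | hspos
      · exact ha0big
      · by_contra hnb
        have hsSm : s ∈ Sm :=
          Finset.mem_filter.2 ⟨Finset.mem_Icc.2 ⟨hspos, by omega⟩, hnb⟩
        exact absurd (Sm.min'_le s hsSm) (not_le.2 hs)
    rcases lt_trichotomy (a s₀) v with hc | hc | hc
    · -- small to the left of v
      have hb := h6 (a s₀) hns hc
      have hsubset : (Finset.range s₀).image a ⊆ big.filter (fun x => x < a s₀) := by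
        intro x hx
        obtain ⟨s, hs, rfl⟩ := Finset.mem_image.1 hx
        rw [Finset.mem_range] at hs
        exact Finset.mem_filter.2 ⟨hprev s hs, amono s s₀ hs hs2⟩
      have hcard : ((Finset.range s₀).image a).card = s₀ := by
        rw [Finset.card_image_of_injOn, Finset.card_range]
        intro x hx y hy hxy
        rw [Finset.mem_coe, Finset.mem_range] at hx hy
        exact hainj x y (by omega) (by omega) hxy
      have hle := Finset.card_le_card hsubset
      rw [hcard] at hle
      have hval := aval s₀ hs2
      rcases le_or_gt s₀ j with hsj | hsj
      · rw [min_eq_left hsj] at hval; omega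
      · rw [min_eq_right (by omega)] at hval; omega
    · exact hns (hc ▸ hv)
    · have := h7 (a s₀) hns hc
      have := hpos (a s₀)
      omega
  · -- all chain elements big : pigeonhole
    have hall : ∀ s, 1 ≤ s → s ≤ j + 1 → a s ∈ big := by
      intro s hs1 hs2
      by_contra hnb
      exact hne ⟨s, Finset.mem_filter.2 ⟨Finset.mem_Icc.2 ⟨hs1, hs2⟩, hnb⟩⟩
    set I := (Finset.Icc 1 (j + 1)).image (fun s => π (a s)) with hI
    have hIcard : I.card = j + 1 := by
      rw [hI, Finset.card_image_of_injOn, Nat.card_Icc]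
      · omega
      · intro x hx y hy hxy
        rw [Finset.mem_coe, Finset.mem_Icc] at hx hy
        have := hinj (hall x hx.1 hx.2) (hall y hy.1 hy.2) hxy
        exact hainj x y (by omega) (by omega) this
    have hIsub : I ⊆ Finset.Icc (W - j) (W - 1) := by
      intro x hx
      obtain ⟨s, hs, rfl⟩ := Finset.mem_image.1 hx
      rw [Finset.mem_Icc] at hs
      have hsbig := hall s hs.1 hs.2
      have hπs := hπ _ hsbig
      have hval := aval s hs.2
      have hrs : W - j ≤ r (a s) := by
        have : min s j ≤ j := min_le_right _ _
        omega
      have hne' : π (a s) ≠ W := by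
        intro hW'
        have : a s = a 0 := hinj hsbig ha0big (by rw [hW', hπW _ ha0])
        have := hainj s 0 (by omega) (by omega) this
        omega
      rw [Finset.mem_Icc]
      omega
    have := Finset.card_le_card hIsub
    rw [hIcard, Nat.card_Icc] at this
    omega

lemma star {big : Finset (Fin n)} {X : ℕ} {v : Fin n}
    (hwit : Wit n W r big X v) (hD : DC n W r)
    (hU : DC n W (fun i => r i.rev)) (hpos : ∀ i, 1 ≤ r i) : False := by
  classical
  have hWit := hwit
  obtain ⟨h1, h2, hv, h4, h5, h6, h7, π, hπ, hinj⟩ := hwit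
  obtain ⟨j, a, amono, aval⟩ := hD
  obtain ⟨k, b0, bmono, bval0⟩ := hU
  set b : ℕ → Fin n := fun s => (b0 s).rev with hb
  have bval : ∀ s, s ≤ k + 1 → r (b s) = W - min s k := fun s hs => bval0 s hs
  have banti : ∀ s s', s < s' → s' ≤ k + 1 → b s' < b s := by
    intro s s' hss hs'
    have := bmono s s' hss hs'
    exact Fin.rev_lt_rev.2 this
  have hjW : j + 1 ≤ W := by
    have hval := aval (j + 1) le_rfl
    rw [min_eq_right (by omega)] at hval
    have := hpos (a (j + 1))
    omega
  have hkW : k + 1 ≤ W := by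
    have hval := bval (k + 1) le_rfl
    rw [min_eq_right (by omega)] at hval
    have := hpos (b (k + 1))
    omega
  have hainj : ∀ s s', s ≤ j + 1 → s' ≤ j + 1 → a s = a s' → s = s' := by
    intro s s' hs hs' heq
    rcases lt_trichotomy s s' with hc | hc | hc
    · exact absurd heq (ne_of_lt (amono s s' hc hs'))
    · exact hc
    · exact absurd heq.symm (ne_of_lt (amono s' s hc hs))
  have hbigW : ∀ i, r i = W → i ∈ big := by
    intro i hri
    by_contra hni
    rcases lt_trichotomy i v with hc | rfl | hc
    · have := h6 i hni hc; omega
    · exact hni hv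
    · have := h7 i hni hc; omega
  have hπW : ∀ i, r i = W → π i = W := by
    intro i hri
    have := hπ i (hbigW i hri)
    omega
  have ha0 : r (a 0) = W := by
    have := aval 0 (by omega); rw [min_eq_left (Nat.zero_le _)] at this; omega
  have hb0 : r (b 0) = W := by
    have := bval 0 (by omega); rw [min_eq_left (Nat.zero_le _)] at this; omega
  -- j, k ≥ 1
  rcases Nat.eq_zero_or_pos j with rfl | hj1
  · have h01 : r (a 1) = W := by
      have := aval 1 le_rfl; rw [min_eq_right (by omega)] at this; omega
    have : a 0 = a 1 :=
      hinj (hbigW _ ha0) (hbigW _ h01) (by rw [hπW _ ha0, hπW _ h01])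
    exact absurd this (ne_of_lt (amono 0 1 (by omega) le_rfl))
  rcases Nat.eq_zero_or_pos k with rfl | hk1
  · have h01 : r (b 1) = W := by
      have := bval 1 le_rfl; rw [min_eq_right (by omega)] at this; omega
    have : b 0 = b 1 :=
      hinj (hbigW _ hb0) (hbigW _ h01) (by rw [hπW _ hb0, hπW _ h01])
    exact absurd this (ne_of_gt (banti 0 1 (by omega) le_rfl))
  -- p = q
  have hpq : a 0 = b 0 :=
    hinj (hbigW _ ha0) (hbigW _ hb0) (by rw [hπW _ ha0, hπW _ hb0])
  rcases eq_or_ne X 1 with rfl | hX1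
  · -- X = 1 : use the reversed witness
    have hrev := revWit hWit
    have hW11 : W + 1 - 1 = W := by omega
    rw [hW11] at hrev
    exact star_right hrev ⟨k, b0, bmono, bval0⟩ (fun i => hpos i.rev)
  rcases eq_or_ne X W with rfl | hXW
  · exact star_right hWit ⟨j, a, amono, aval⟩ hpos
  -- middle case
  have hX2 : 2 ≤ X := by omega
  have hXW1 : X + 1 ≤ W := by omega
  set m := min (min (X - 1) (W - X)) (min j k) with hm
  have hm1 : 1 ≤ m := by
    rw [hm]
    simp only [le_min_iff]
    omega
  have hmj : m ≤ j := le_trans (min_le_right _ _) (min_le_left _ _)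
  have hmk : m ≤ k := le_trans (min_le_right _ _) (min_le_right _ _)
  have hmX : m ≤ X - 1 := le_trans (min_le_left _ _) (min_le_left _ _)
  have hmWX : m ≤ W - X := le_trans (min_le_left _ _) (min_le_right _ _)

  have hbinj : ∀ s s', s ≤ k + 1 → s' ≤ k + 1 → b s = b s' → s = s' := by
    intro s s' hs hs' heq
    rcases lt_trichotomy s s' with hc | hc | hc
    · exact absurd heq.symm (ne_of_lt (banti s s' hc hs'))
    · exact hc
    · exact absurd heq (ne_of_lt (banti s' s hc hs))
  have habig : ∀ s, 1 ≤ s → s ≤ m → a s ∈ big := by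
    intro s hs1 hsm
    by_contra hnb
    have hval : r (a s) = W - s := by
      have := aval s (by omega)
      rwa [min_eq_left (by omega)] at this
    rcases lt_trichotomy (a s) v with hc | hc | hc
    · have := h6 _ hnb hc; omega
    · exact hnb (hc ▸ hv)
    · have := h7 _ hnb hc; omega
  have hbbig : ∀ s, 1 ≤ s → s ≤ m → b s ∈ big := by
    intro s hs1 hsm
    by_contra hnb
    have hval : r (b s) = W - s := by
      have := bval s (by omega)
      rwa [min_eq_left (by omega)] at this
    rcases lt_trichotomy (b s) v with hc | hc | hc
    · have := h6 _ hnb hc; omega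
    · exact hnb (hc ▸ hv)
    · have := h7 _ hnb hc; omega
  set Ia := (Finset.Icc 1 m).image (fun s => π (a s)) with hIa
  set Ib := (Finset.Icc 1 m).image (fun s => π (b s)) with hIb
  have hIacard : Ia.card = m := by
    rw [hIa, Finset.card_image_of_injOn, Nat.card_Icc]
    · omega
    · intro x hx y hy hxy
      rw [Finset.mem_coe, Finset.mem_Icc] at hx hy
      have := hinj (habig x hx.1 hx.2) (habig y hy.1 hy.2) hxy
      exact hainj x y (by omega) (by omega) this
  have hIbcard : Ib.card = m := by
    rw [hIb, Finset.card_image_of_injOn, Nat.card_Icc]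
    · omega
    · intro x hx y hy hxy
      rw [Finset.mem_coe, Finset.mem_Icc] at hx hy
      have := hinj (hbbig x hx.1 hx.2) (hbbig y hy.1 hy.2) hxy
      exact hbinj x y (by omega) (by omega) this
  have hIasub : Ia ⊆ Finset.Icc (W - m) (W - 1) := by
    intro x hx
    obtain ⟨s, hs, rfl⟩ := Finset.mem_image.1 hx
    rw [Finset.mem_Icc] at hs
    have hsbig := habig s hs.1 hs.2
    have hπs := hπ _ hsbig
    have hval : r (a s) = W - s := by
      have := aval s (by omega)
      rwa [min_eq_left (by omega)] at this
    have hne' : π (a s) ≠ W := by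
      intro hW'
      have := hinj hsbig (hbigW _ ha0) (by rw [hW', hπW _ ha0])
      have := hainj s 0 (by omega) (by omega) this
      omega
    rw [Finset.mem_Icc]
    omega
  have hIbsub : Ib ⊆ Finset.Icc (W - m) (W - 1) := by
    intro x hx
    obtain ⟨s, hs, rfl⟩ := Finset.mem_image.1 hx
    rw [Finset.mem_Icc] at hs
    have hsbig := hbbig s hs.1 hs.2
    have hπs := hπ _ hsbig
    have hval : r (b s) = W - s := by
      have := bval s (by omega)
      rwa [min_eq_left (by omega)] at this
    have hne' : π (b s) ≠ W := by
      intro hW'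
      have := hinj hsbig (hbigW _ hb0) (by rw [hW', hπW _ hb0])
      have := hbinj s 0 (by omega) (by omega) this
      omega
    rw [Finset.mem_Icc]
    omega
  have hdisj : Disjoint Ia Ib := by
    rw [Finset.disjoint_left]
    rintro x hxa hxb
    obtain ⟨s, hs, rfl⟩ := Finset.mem_image.1 hxa
    obtain ⟨s', hs', heq⟩ := Finset.mem_image.1 hxb
    rw [Finset.mem_Icc] at hs hs'
    have hsb := habig s hs.1 hs.2
    have hs'b := hbbig s' hs'.1 hs'.2
    have heq' : b s' = a s := hinj hs'b hsb heq
    have hlt1 : b s' < b 0 := banti 0 s' (by omega) (by omega)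
    have hlt2 : a 0 < a s := amono 0 s (by omega) (by omega)
    rw [hpq] at hlt2
    rw [heq'] at hlt1
    exact absurd hlt2 (asymm hlt1)
  have hcards : (Ia ∪ Ib).card = m + m := by
    rw [Finset.card_union_of_disjoint hdisj, hIacard, hIbcard]
  have hsub : Ia ∪ Ib ⊆ Finset.Icc (W - m) (W - 1) :=
    Finset.union_subset hIasub hIbsub
  have hfin := Finset.card_le_card hsub
  rw [hcards, Nat.card_Icc] at hfin
  omega


lemma corner (n W : ℕ) (r : Fin n → ℕ) (hW : 2 ≤ W) (hpos : ∀ i, 1 ≤ r i)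
    (h : ∃ big X v, Wit n W r big X v) :
    ∃ big X v, Wit n W r big X v ∧ (X = 1 ∨ X = W) := by
  obtain ⟨big0, X0, v0, h0⟩ := h
  have hn : 0 < n := v0.pos
  have hbW : ∀ i, r i ≤ W := wit_bound h0
  by_cases hU : DC n W (fun i => r i.rev)
  · have hD : ¬ DC n W r := fun hD => star h0 hD hU hpos
    obtain ⟨big, v, hwit⟩ := lemma1 hn hpos hbW (by omega) hD
    exact ⟨big, W, v, hwit, Or.inr rfl⟩
  · have hpos' : ∀ i : Fin n, 1 ≤ (fun i : Fin n => r i.rev) i := fun i => hpos _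
    have hbW' : ∀ i : Fin n, (fun i : Fin n => r i.rev) i ≤ W := fun i => hbW _
    obtain ⟨big, v, hwit⟩ := lemma1 hn hpos' hbW' (by omega) hU
    have hrev := revWit hwit
    simp only [Fin.rev_rev] at hrev
    have h1W : W + 1 - W = 1 := by omega
    rw [h1W] at hrev
    exact ⟨_, _, _, hrev, Or.inl rfl⟩

end RTreeAux

namespace RTree

lemma exists_hasRankWitness (rs : List ℕ) (h : rs ≠ []) :
    ∃ W, 1 ≤ W ∧ hasRankWitness rs W := by
  classical
  have hn : 0 < rs.length := List.length_pos_iff.2 h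
  set v : Fin rs.length := ⟨0, hn⟩ with hv
  refine ⟨rs.sum + rs.length, by omega, Finset.univ, 1, v, ?_⟩
  refine ⟨le_rfl, by omega, Finset.mem_univ _, ?_, ?_, ?_, ?_, ?_⟩
  · have he : Finset.univ.filter (fun i : Fin rs.length => i < v) = ∅ := by
      apply Finset.filter_eq_empty_iff.2
      intro i _
      simp [hv, Fin.lt_def]
    rw [he]
    simp
  · have hsub : Finset.univ.filter (fun i : Fin rs.length => v < i) ⊆
        Finset.univ.erase v := by
      intro i hi
      rw [Finset.mem_filter] at hi
      exact Finset.mem_erase.2 ⟨hi.2.ne', Finset.mem_univ _⟩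
    have hc := Finset.card_le_card hsub
    rw [Finset.card_erase_of_mem (Finset.mem_univ _), Finset.card_univ,
      Fintype.card_fin] at hc
    omega
  · intro i hi _
    exact absurd (Finset.mem_univ i) hi
  · intro i hi _
    exact absurd (Finset.mem_univ i) hi
  · refine ⟨fun i => rs.sum + 1 + i.1, ?_, ?_⟩
    · intro i _
      dsimp only
      have hle : rs.get i ≤ rs.sum :=
        List.single_le_sum (fun x _ => Nat.zero_le x) _ (List.get_mem rs i)
      have hlt := i.isLt
      exact ⟨by omega, by omega, by omega⟩
    · intro x _ y _ hxy
      have hxy' : rs.sum + 1 + x.1 = rs.sum + 1 + y.1 := hxy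
      exact Fin.ext (by omega)

lemma rank_pos (T : RTree) : 1 ≤ rank T := by
  obtain ⟨cs⟩ := T
  rw [rank]
  by_cases h : (cs.attach.map fun c => rank c.1) = []
  · rw [rankAux, if_pos h]
  · rw [rankAux, if_neg h]
    obtain ⟨W, hW, hwit⟩ := exists_hasRankWitness _ h
    exact (Nat.sInf_mem (⟨W, hW, hwit⟩ :
      Set.Nonempty {W' | 1 ≤ W' ∧ hasRankWitness _ W'})).1

theorem rankWitness_corner_coordinate' (T : RTree) (W : ℕ)
    (hW : 2 ≤ W) (hT : rank T = W) :
    ∃ (big : Finset (Fin (T.children.map rank).length)) (X : ℕ)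
      (v : Fin (T.children.map rank).length),
      IsRankWitness (T.children.map rank) W big X v ∧ (X = 1 ∨ X = W) := by
  obtain ⟨cs⟩ := T
  show ∃ (big : Finset (Fin (cs.map rank).length)) (X : ℕ)
      (v : Fin (cs.map rank).length),
      IsRankWitness (cs.map rank) W big X v ∧ (X = 1 ∨ X = W)
  set rs : List ℕ := cs.map rank with hrs
  have hattach : (cs.attach.map fun c => rank c.1) = rs := by
    simp [hrs]
  rw [rank, hattach] at hT
  have hne : rs ≠ [] := by
    intro h0
    rw [h0, rankAux, if_pos rfl] at hT
    omega
  obtain ⟨W0, hW0, hwit0⟩ := exists_hasRankWitness rs hne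
  have hWs : W = sInf {W' | 1 ≤ W' ∧ hasRankWitness rs W'} := by
    rw [← hT, rankAux, if_neg hne]
  have hmem : W ∈ {W' | 1 ≤ W' ∧ hasRankWitness rs W'} := by
    rw [hWs]
    exact Nat.sInf_mem ⟨W0, hW0, hwit0⟩
  have hwitW : hasRankWitness rs W := hmem.2
  have hpos : ∀ i : Fin rs.length, 1 ≤ rs.get i := by
    intro i
    have hi := i.isLt
    simp only [List.get_eq_getElem, hrs, List.getElem_map]
    exact rank_pos _
  obtain ⟨big, X, v, hwit, hX⟩ :=
    RTreeAux.corner rs.length W rs.get hW hpos hwitW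
  exact ⟨big, X, v, hwit, hX⟩


/-- Every ordered rooted tree of rank `W ≥ 2` has a rank-`W`-witness whose
coordinate `X` satisfies `X = 1` or `X = W`. -/
theorem rankWitness_corner_coordinate (T : RTree) (W : ℕ)
    (hW : 2 ≤ W) (hT : rank T = W) :
    ∃ (big : Finset (Fin (T.children.map rank).length)) (X : ℕ)
      (v : Fin (T.children.map rank).length),
      IsRankWitness (T.children.map rank) W big X v ∧ (X = 1 ∨ X = W) :=
  rankWitness_corner_coordinate' T W hW hT

end RTree
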